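/- Let n ≥ 1, let 𝒴 = {1, ..., K} with K ≥ 1, and let (X_i, Y_i), i = 1, ..., 2n+1, be random variables with values in 𝒳 × 𝒴 whose joint distribution is exchangeable. Fix a measurable score function s : 𝒳 × 𝒴 → ℝ. For y ∈ 𝒴 let I_y = {i ∈ {n+1,...,2n} : Y_i = y}, n_y = |I_y|, and define p(X_{2n+1}|y) = (Σ_{i ∈ I_y} 1{s(X_i, y) ≤ s(X_{2n+1}, y)} + 1)/(n_y + 1). Fix y ∈ 𝒴 and a subset I ⊆ {n+1,...,2n} with |I| = m such that P(I_y = I, Y_{2n+1} = y) > 0, and suppose that on this event the scores {s(X_i, y) : i ∈ I} ∪ {s(X_{2n+1}, y)} are almost surely pairwise distinct. Then for every α ∈ (0,1), P(p(X_{2n+1}|y) ≤ α | I_y = I, Y_{2n+1} = y) ≥ α − 1/(m+1). -/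

import Mathlib

open MeasureTheory ProbabilityTheory
open scoped ENNReal

/-- Rank helper: ranks of an injective family are a bijection onto `Icc 1 J.card`. -/
lemma rank_exists_unique {ι : Type*} [DecidableEq ι] (J : Finset ι) (f : ι → ℝ)
    (hf : Set.InjOn f ↑J) (k : ℕ) (hk : k ∈ Finset.Icc 1 J.card) :
    ∃! j, j ∈ J ∧ (J.filter (fun i => f i ≤ f j)).card = k := by
  set r : ι → ℕ := fun j => (J.filter (fun i => f i ≤ f j)).card with hr
  have key : ∀ a ∈ J, ∀ b ∈ J, f a < f b → r a < r b := by
    intro a ha b hb h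
    have hsub : J.filter (fun i => f i ≤ f a) ⊆ J.filter (fun i => f i ≤ f b) :=
      fun x hx => Finset.mem_filter.mpr ⟨(Finset.mem_filter.mp hx).1,
        le_trans (Finset.mem_filter.mp hx).2 h.le⟩
    have hss : J.filter (fun i => f i ≤ f a) ⊂ J.filter (fun i => f i ≤ f b) := by
      refine ⟨hsub, fun hsub' => ?_⟩
      have hb' : b ∈ J.filter (fun i => f i ≤ f a) :=
        hsub' (Finset.mem_filter.mpr ⟨hb, le_refl _⟩)
      exact absurd (Finset.mem_filter.mp hb').2 (not_le.mpr h)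
    exact Finset.card_lt_card hss
  have hinj : Set.InjOn r ↑J := by
    intro a ha b hb hab
    by_contra hne
    have hfne : f a ≠ f b := fun h => hne (hf ha hb h)
    rcases lt_or_gt_of_ne hfne with h | h
    · exact absurd hab (key a ha b hb h).ne
    · exact absurd hab.symm (key b hb a ha h).ne
  have himg : J.image r = Finset.Icc 1 J.card := by
    apply Finset.eq_of_subset_of_card_le
    · intro k hk
      rcases Finset.mem_image.mp hk with ⟨j, hj, rfl⟩
      refine Finset.mem_Icc.mpr ⟨?_, Finset.card_le_card (Finset.filter_subset _ _)⟩
      exact Finset.card_pos.mpr ⟨j, Finset.mem_filter.mpr ⟨hj, le_refl _⟩⟩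
    · rw [Nat.card_Icc, Finset.card_image_of_injOn hinj]
      omega
  have hkimg : k ∈ J.image r := himg ▸ hk
  rcases Finset.mem_image.mp hkimg with ⟨j, hj, hjk⟩
  exact ⟨j, ⟨hj, hjk⟩, fun j' ⟨hj', hjk'⟩ => hinj hj' hj (hjk'.trans hjk.symm)⟩

theorem conditional_procedure3_fwer_lower_bound
    {Ω : Type*} [MeasurableSpace Ω] (P : Measure Ω) [IsProbabilityMeasure P]
    {𝒳 : Type*} [MeasurableSpace 𝒳]
    (n K : ℕ) (hn : 1 ≤ n) (hK : 1 ≤ K)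
    (Z : Fin (2 * n + 1) → Ω → 𝒳 × Fin K)
    (hmeas : ∀ i, Measurable (Z i))
    (hexch : ∀ σ : Equiv.Perm (Fin (2 * n + 1)),
      Measure.map (fun ω i => Z (σ i) ω) P = Measure.map (fun ω i => Z i ω) P)
    (s : 𝒳 × Fin K → ℝ) (hs : Measurable s)
    (Dcal : Finset (Fin (2 * n + 1)))
    (hDcal : Dcal = Finset.univ.filter
      (fun i : Fin (2 * n + 1) => n ≤ (i : ℕ) ∧ (i : ℕ) < 2 * n))
    (Iy : Fin K → Ω → Finset (Fin (2 * n + 1)))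
    (hIy : ∀ y ω, Iy y ω = Dcal.filter (fun i => (Z i ω).2 = y))
    (p : Fin K → Ω → ℝ)
    (hp : ∀ y ω, p y ω =
      ((((Iy y ω).filter
          (fun i => s ((Z i ω).1, y) ≤ s ((Z (Fin.last (2 * n)) ω).1, y))).card : ℝ) + 1)
        / (((Iy y ω).card : ℝ) + 1))
    (α : ℝ) (hα : α ∈ Set.Ioo (0 : ℝ) 1)
    (y : Fin K) (I : Finset (Fin (2 * n + 1))) (hI : I ⊆ Dcal)
    (m : ℕ) (hm : I.card = m)
    (hpos : 0 < P {ω | Iy y ω = I ∧ (Z (Fin.last (2 * n)) ω).2 = y})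
    (hdist : ∀ᵐ ω ∂P, (Iy y ω = I ∧ (Z (Fin.last (2 * n)) ω).2 = y) →
      Set.InjOn (fun i => s ((Z i ω).1, y)) ↑(insert (Fin.last (2 * n)) I)) :
    ENNReal.ofReal (α - 1 / (m + 1)) ≤
      P[|{ω | Iy y ω = I ∧ (Z (Fin.last (2 * n)) ω).2 = y}] {ω | p y ω ≤ α} := by
  obtain ⟨hα0, hα1⟩ := hα
  set L : Fin (2 * n + 1) := Fin.last (2 * n) with hLdef
  set E : Set Ω := {ω | Iy y ω = I ∧ (Z L ω).2 = y} with hEdef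
  set J : Finset (Fin (2 * n + 1)) := insert L I with hJdef
  -- basic facts
  have hLD : L ∉ Dcal := by
    rw [hDcal]
    simp only [Finset.mem_filter, Finset.mem_univ, true_and, hLdef, Fin.val_last]
    omega
  have hLI : L ∉ I := fun h => hLD (hI h)
  have hJcard : J.card = m + 1 := by
    rw [hJdef, Finset.card_insert_of_notMem hLI, hm]
  -- score and rank functions
  set g : Fin (2 * n + 1) → Ω → ℝ := fun i ω => s ((Z i ω).1, y) with hgdef
  set r : Fin (2 * n + 1) → Ω → ℕ :=
    fun j ω => (J.filter (fun i => g i ω ≤ g j ω)).card with hrdef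
  have hgm : ∀ i, Measurable (g i) :=
    fun i => hs.comp ((hmeas i).fst.prodMk measurable_const)
  have hrm : ∀ j, Measurable (r j) := by
    intro j
    have hrw : r j = fun ω => ∑ i ∈ J, if g i ω ≤ g j ω then 1 else 0 := by
      funext ω; rw [hrdef]; exact Finset.card_filter _ _
    rw [hrw]
    exact Finset.measurable_sum _ (fun i _ =>
      Measurable.ite (measurableSet_le (hgm i) (hgm j)) measurable_const measurable_const)
  -- characterization of E
  have hEiff : ∀ ω, Iy y ω = I ↔ ∀ i ∈ Dcal, ((Z i ω).2 = y ↔ i ∈ I) := by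
    intro ω
    rw [hIy, Finset.ext_iff]
    constructor
    · intro h i hi
      rw [← h i]
      simp [Finset.mem_filter, hi]
    · intro h a
      simp only [Finset.mem_filter]
      constructor
      · rintro ⟨ha, hya⟩; exact (h a ha).mp hya
      · intro ha; exact ⟨hI ha, (h a (hI ha)).mpr ha⟩
  -- events in the path space
  set V := (Fin (2 * n + 1) → 𝒳 × Fin K) with hVdef
  set ZV : Ω → V := fun ω i => Z i ω with hZVdef
  have hZVm : Measurable ZV := measurable_pi_lambda _ hmeas
  set SE : Set V := {z | (∀ i ∈ Dcal, ((z i).2 = y ↔ i ∈ I)) ∧ (z L).2 = y} with hSEdef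
  set rk : V → ℕ :=
    fun z => (J.filter (fun i => s ((z i).1, y) ≤ s ((z L).1, y))).card with hrkdef
  have hYm : ∀ i : Fin (2 * n + 1), MeasurableSet {z : V | (z i).2 = y} := by
    intro i
    exact (Measurable.snd (measurable_pi_apply i)) (measurableSet_singleton y)
  have hSEm : MeasurableSet SE := by
    have : SE = (⋂ i ∈ (Dcal : Set (Fin (2 * n + 1))),
        {z : V | (z i).2 = y ↔ i ∈ I}) ∩ {z : V | (z L).2 = y} := by
      ext z; simp [hSEdef]
    rw [this]
    refine MeasurableSet.inter ?_ (hYm L)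
    refine MeasurableSet.biInter (Set.to_countable _) (fun i _ => ?_)
    by_cases hi : i ∈ I
    · simp only [hi, iff_true]; exact hYm i
    · simp only [hi, iff_false]
      exact (hYm i).compl
  have hrkm : Measurable rk := by
    have hrw : rk = fun z => ∑ i ∈ J,
        if s ((z i).1, y) ≤ s ((z L).1, y) then 1 else 0 := by
      funext z; rw [hrkdef]; exact Finset.card_filter _ _
    rw [hrw]
    refine Finset.measurable_sum _ (fun i _ => Measurable.ite ?_ measurable_const
      measurable_const)
    exact measurableSet_le
      (hs.comp ((Measurable.fst (measurable_pi_apply i)).prodMk measurable_const))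
      (hs.comp ((Measurable.fst (measurable_pi_apply L)).prodMk measurable_const))
  have hEm : MeasurableSet E := by
    have : E = ZV ⁻¹' SE := by
      ext ω
      simp only [hEdef, Set.mem_setOf_eq, Set.mem_preimage, hSEdef, hZVdef]
      rw [hEiff]
    rw [this]; exact hZVm hSEm
  have hAm : ∀ j k, MeasurableSet {ω | r j ω = k} :=
    fun j k => (hrm j) (measurableSet_singleton k)
  -- exchangeability transfer
  have hexch' : ∀ (σ : Equiv.Perm (Fin (2 * n + 1))) (S : Set V), MeasurableSet S →
      P ((fun ω i => Z (σ i) ω) ⁻¹' S) = P (ZV ⁻¹' S) := by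
    intro σ S hS
    rw [← Measure.map_apply (measurable_pi_lambda _ (fun i => hmeas (σ i))) hS,
      ← Measure.map_apply hZVm hS, hexch σ]
  -- the key swap identity
  have hswap : ∀ j ∈ I, ∀ k : ℕ,
      P (E ∩ {ω | r j ω = k}) = P (E ∩ {ω | r L ω = k}) := by
    intro j hjI k
    have hjD : j ∈ Dcal := hI hjI
    have hjL : j ≠ L := fun h => hLD (h ▸ hjD)
    have hσL : Equiv.swap L j L = j := Equiv.swap_apply_left L j
    have hσj : Equiv.swap L j j = L := Equiv.swap_apply_right L j
    have hσi : ∀ i, i ≠ L → i ≠ j → Equiv.swap L j i = i :=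
      fun i h1 h2 => Equiv.swap_apply_of_ne_of_ne h1 h2
    have hσJ : ∀ i ∈ J, Equiv.swap L j i ∈ J := by
      intro i hi
      rcases eq_or_ne i L with rfl | hiL
      · rw [hσL]; exact Finset.mem_insert_of_mem hjI
      rcases eq_or_ne i j with rfl | hij
      · rw [hσj]; exact Finset.mem_insert_self _ _
      · rw [hσi i hiL hij]; exact hi
    have hSm : MeasurableSet (SE ∩ rk ⁻¹' {k}) :=
      hSEm.inter (hrkm (measurableSet_singleton k))
    have key := hexch' (Equiv.swap L j) (SE ∩ rk ⁻¹' {k}) hSm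
    have h1 : ZV ⁻¹' (SE ∩ rk ⁻¹' {k}) = E ∩ {ω | r L ω = k} := by
      ext ω
      simp only [Set.mem_preimage, Set.mem_inter_iff, hSEdef, Set.mem_setOf_eq,
        Set.mem_singleton_iff, hZVdef, hEdef]
      constructor
      · rintro ⟨⟨ha, hb⟩, hc⟩
        exact ⟨⟨(hEiff ω).mpr ha, hb⟩, hc⟩
      · rintro ⟨⟨ha, hb⟩, hc⟩
        exact ⟨⟨(hEiff ω).mp ha, hb⟩, hc⟩
    have h2 : (fun ω i => Z ((Equiv.swap L j) i) ω) ⁻¹' (SE ∩ rk ⁻¹' {k})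
        = E ∩ {ω | r j ω = k} := by
      ext ω
      simp only [Set.mem_preimage, Set.mem_inter_iff, hSEdef, Set.mem_setOf_eq,
        Set.mem_singleton_iff, hEdef]
      change ((∀ i ∈ Dcal, ((Z ((Equiv.swap L j) i) ω).2 = y ↔ i ∈ I)) ∧
        (Z ((Equiv.swap L j) L) ω).2 = y) ∧ rk (fun i => Z ((Equiv.swap L j) i) ω) = k ↔ _
      rw [hσL]
      have hrank : rk (fun i => Z ((Equiv.swap L j) i) ω) = r j ω := by
        rw [hrkdef, hrdef]
        simp only [hσL]
        have himg : J.filter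
              (fun i => s ((Z ((Equiv.swap L j) i) ω).1, y) ≤ s ((Z j ω).1, y))
            = (J.filter (fun i => s ((Z i ω).1, y) ≤ s ((Z j ω).1, y))).image
                (Equiv.swap L j) := by
          ext a
          simp only [Finset.mem_filter, Finset.mem_image]
          constructor
          · rintro ⟨haJ, haQ⟩
            exact ⟨Equiv.swap L j a, ⟨hσJ a haJ, haQ⟩, Equiv.swap_apply_self L j a⟩
          · rintro ⟨b, ⟨hbJ, hbQ⟩, hba⟩
            subst hba
            refine ⟨hσJ b hbJ, ?_⟩
            rw [Equiv.swap_apply_self]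
            exact hbQ
        rw [himg, Finset.card_image_of_injective _ (Equiv.injective _)]
      have hAiff : ((∀ i ∈ Dcal, ((Z ((Equiv.swap L j) i) ω).2 = y ↔ i ∈ I))
          ∧ (Z j ω).2 = y) ↔ (Iy y ω = I ∧ (Z L ω).2 = y) := by
        constructor
        · rintro ⟨h1', h2'⟩
          have hYL : (Z L ω).2 = y := by
            have := h1' j hjD
            rw [hσj] at this
            exact this.mpr hjI
          refine ⟨(hEiff ω).mpr ?_, hYL⟩
          intro i hiD
          rcases eq_or_ne i j with rfl | hij
          · exact ⟨fun _ => hjI, fun _ => h2'⟩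
          · have hiL : i ≠ L := fun h => hLD (h ▸ hiD)
            have := h1' i hiD
            rwa [hσi i hiL hij] at this
        · rintro ⟨h1', h2'⟩
          have hall := (hEiff ω).mp h1'
          have hYj : (Z j ω).2 = y := (hall j hjD).mpr hjI
          refine ⟨?_, hYj⟩
          intro i hiD
          rcases eq_or_ne i j with rfl | hij
          · rw [hσj]
            exact ⟨fun _ => hjI, fun _ => h2'⟩
          · have hiL : i ≠ L := fun h => hLD (h ▸ hiD)
            rw [hσi i hiL hij]
            exact hall i hiD
      constructor
      · rintro ⟨⟨ha, hb⟩, hc⟩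
        rw [hrank] at hc
        exact ⟨hAiff.mp ⟨ha, hb⟩, hc⟩
      · rintro ⟨hE', hc⟩
        obtain ⟨ha, hb⟩ := hAiff.mpr hE'
        rw [← hrank] at hc
        exact ⟨⟨ha, hb⟩, hc⟩
    rw [← h2, key, h1]
  -- removing the null set
  have hcount : ∀ k ∈ Finset.Icc 1 (m + 1),
      ∑ j ∈ J, P (E ∩ {ω | r j ω = k}) = P E := by
    intro k hk
    obtain ⟨N, hNsub, hNm, hNnull⟩ := exists_measurable_superset_of_null (ae_iff.mp hdist)
    set E' : Set Ω := E \ N with hE'def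
    have hE'm : MeasurableSet E' := hEm.diff hNm
    have hinj : ∀ ω ∈ E', Set.InjOn (fun i => s ((Z i ω).1, y)) ↑J := by
      intro ω hω
      obtain ⟨hωE, hωN⟩ := hω
      have hnn : ¬¬((Iy y ω = I ∧ (Z L ω).2 = y) →
          Set.InjOn (fun i => s ((Z i ω).1, y)) ↑J) :=
        fun hc => hωN (hNsub hc)
      exact (not_not.mp hnn) hωE
    have huniq : ∀ ω ∈ E', ∃! j, j ∈ J ∧ r j ω = k := by
      intro ω hω
      have := rank_exists_unique J (fun i => s ((Z i ω).1, y)) (hinj ω hω) k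
        (by rwa [hJcard])
      exact this
    have hUnion : (⋃ j ∈ J, (E' ∩ {ω | r j ω = k})) = E' := by
      ext ω
      simp only [Set.mem_iUnion, Set.mem_inter_iff, Set.mem_setOf_eq]
      constructor
      · rintro ⟨j, _, hωE', _⟩
        exact hωE'
      · intro hωE'
        obtain ⟨j, ⟨hjJ, hjr⟩, _⟩ := huniq ω hωE'
        exact ⟨j, hjJ, hωE', hjr⟩
    have hdisj : (↑J : Set (Fin (2 * n + 1))).PairwiseDisjoint
        (fun j => E' ∩ {ω | r j ω = k}) := by
      intro a haJ b hbJ hab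
      simp only [Function.onFun]
      rw [Set.disjoint_left]
      rintro ω ⟨hωE', hra⟩ ⟨_, hrb⟩
      obtain ⟨j₀, _, huni⟩ := huniq ω hωE'
      exact hab ((huni a ⟨haJ, hra⟩).trans (huni b ⟨hbJ, hrb⟩).symm)
    have hsum : ∑ j ∈ J, P (E' ∩ {ω | r j ω = k}) = P E' := by
      rw [← measure_biUnion_finset hdisj (fun j _ => hE'm.inter (hAm j k)), hUnion]
    have hsame : ∀ j, P (E ∩ {ω | r j ω = k}) = P (E' ∩ {ω | r j ω = k}) := by
      intro j
      have heq : E' ∩ {ω | r j ω = k} = (E ∩ {ω | r j ω = k}) \ N := by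
        rw [hE'def, Set.diff_eq, Set.diff_eq]
        ext ω; simp only [Set.mem_inter_iff, Set.mem_compl_iff]; tauto
      rw [heq, measure_diff_null hNnull]
    have hPE' : P E' = P E := measure_diff_null hNnull
    rw [Finset.sum_congr rfl (fun j _ => hsame j), hsum, hPE']
  -- consequence: each rank value has conditional probability 1/(m+1)
  have hunif : ∀ k ∈ Finset.Icc 1 (m + 1),
      P (E ∩ {ω | r L ω = k}) = P E / (m + 1) := by
    intro k hk
    have h1 := hcount k hk
    rw [hJdef, Finset.sum_insert hLI] at h1
    have h2 : ∀ j ∈ I, P (E ∩ {ω | r j ω = k}) = P (E ∩ {ω | r L ω = k}) :=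
      fun j hj => hswap j hj k
    rw [Finset.sum_congr rfl h2, Finset.sum_const, hm] at h1
    have h3 : P (E ∩ {ω | r L ω = k}) * (m + 1) = P E := by
      rw [← h1]
      push_cast
      ring
    have h0 : ((m : ℝ≥0∞) + 1) ≠ 0 := by simp
    have htop : ((m : ℝ≥0∞) + 1) ≠ ⊤ := by simp
    rw [← h3, mul_div_assoc, ENNReal.div_self h0 htop, mul_one]
  -- final computation
  set k₀ : ℕ := ⌊α * ((m : ℝ) + 1)⌋₊ with hk₀def
  have hmpos : (0 : ℝ) < (m : ℝ) + 1 := by positivity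
  have hk₀le : (k₀ : ℝ) ≤ α * ((m : ℝ) + 1) := Nat.floor_le (by positivity)
  have hk₀m : k₀ ≤ m + 1 := by
    have h1 : α * ((m : ℝ) + 1) ≤ ((m + 1 : ℕ) : ℝ) := by push_cast; nlinarith
    calc k₀ ≤ ⌊((m + 1 : ℕ) : ℝ)⌋₊ := Nat.floor_mono h1
      _ = m + 1 := Nat.floor_natCast _
  have hpE : ∀ ω ∈ E, ∀ k : ℕ, r L ω = k → p y ω = (k : ℝ) / ((m : ℝ) + 1) := by
    intro ω hω k hrk
    obtain ⟨hIyI, hYL⟩ := hω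
    have hk' : k = (I.filter
        (fun i => s ((Z i ω).1, y) ≤ s ((Z L ω).1, y))).card + 1 := by
      rw [← hrk, hrdef]
      simp only [hgdef]
      rw [hJdef, Finset.filter_insert, if_pos (le_refl _),
        Finset.card_insert_of_notMem (fun h => hLI (Finset.mem_filter.mp h).1)]
    rw [hp y ω, hIyI, hm, hk']
    push_cast
    ring
  have hsubset : (⋃ k' ∈ Finset.Icc 1 k₀, E ∩ {ω | r L ω = k'})
      ⊆ E ∩ {ω | p y ω ≤ α} := by
    intro ω hω
    simp only [Set.mem_iUnion, Set.mem_inter_iff, Set.mem_setOf_eq] at hω ⊢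
    obtain ⟨k', hk', hωE, hωr⟩ := hω
    refine ⟨hωE, ?_⟩
    rw [hpE ω hωE k' hωr]
    obtain ⟨hk1, hk2⟩ := Finset.mem_Icc.mp hk'
    have hle : (k' : ℝ) ≤ (k₀ : ℝ) := by exact_mod_cast hk2
    rw [div_le_iff₀ hmpos]
    linarith
  have hdisj2 : (↑(Finset.Icc 1 k₀) : Set ℕ).PairwiseDisjoint
      (fun k' => E ∩ {ω | r L ω = k'}) := by
    intro a _ b _ hab
    simp only [Function.onFun]
    rw [Set.disjoint_left]
    rintro ω ⟨_, hra⟩ ⟨_, hrb⟩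
    exact hab (hra.symm.trans hrb)
  have hPB : P (⋃ k' ∈ Finset.Icc 1 k₀, E ∩ {ω | r L ω = k'})
      = k₀ * (P E / ((m : ℝ≥0∞) + 1)) := by
    rw [measure_biUnion_finset hdisj2 (fun k' _ => hEm.inter (hAm L k'))]
    have : ∀ k' ∈ Finset.Icc 1 k₀,
        P (E ∩ {ω | r L ω = k'}) = P E / ((m : ℝ≥0∞) + 1) := by
      intro k' hk'
      obtain ⟨h1, h2⟩ := Finset.mem_Icc.mp hk'
      exact hunif k' (Finset.mem_Icc.mpr ⟨h1, le_trans h2 hk₀m⟩)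
    rw [Finset.sum_congr rfl this, Finset.sum_const, Nat.card_Icc, nsmul_eq_mul]
    norm_num
  have hPEne : P E ≠ 0 := hpos.ne'
  have hPEtop : P E ≠ ⊤ := measure_ne_top P E
  have hreal : α - 1 / ((m : ℝ) + 1) ≤ (k₀ : ℝ) / ((m : ℝ) + 1) := by
    have hfloor : α * ((m : ℝ) + 1) < (k₀ : ℝ) + 1 := Nat.lt_floor_add_one _
    rw [le_div_iff₀ hmpos]
    have hexp : (α - 1 / ((m : ℝ) + 1)) * ((m : ℝ) + 1) = α * ((m : ℝ) + 1) - 1 := by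
      field_simp
    rw [hexp]
    linarith
  calc ENNReal.ofReal (α - 1 / (m + 1))
      ≤ ENNReal.ofReal ((k₀ : ℝ) / ((m : ℝ) + 1)) := ENNReal.ofReal_le_ofReal hreal
    _ = (k₀ : ℝ≥0∞) / ((m : ℝ≥0∞) + 1) := by
        rw [ENNReal.ofReal_div_of_pos hmpos, ENNReal.ofReal_natCast,
          ENNReal.ofReal_add (by positivity) zero_le_one, ENNReal.ofReal_natCast,
          ENNReal.ofReal_one]
    _ = (P E)⁻¹ * ((k₀ : ℝ≥0∞) * (P E / ((m : ℝ≥0∞) + 1))) := by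
        rw [div_eq_mul_inv, div_eq_mul_inv]
        calc (k₀ : ℝ≥0∞) * ((m : ℝ≥0∞) + 1)⁻¹
            = ((k₀ : ℝ≥0∞) * ((m : ℝ≥0∞) + 1)⁻¹) * ((P E)⁻¹ * P E) := by
              rw [ENNReal.inv_mul_cancel hPEne hPEtop, mul_one]
          _ = (P E)⁻¹ * ((k₀ : ℝ≥0∞) * (P E * ((m : ℝ≥0∞) + 1)⁻¹)) := by ring
    _ ≤ (P E)⁻¹ * P (E ∩ {ω | p y ω ≤ α}) := by
        refine mul_le_mul_right ?_ _
        rw [← hPB]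
        exact measure_mono hsubset
    _ = P[|E] {ω | p y ω ≤ α} := (ProbabilityTheory.cond_apply hEm P _).symm
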